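/- Let G be a connected graph, let s and t be distinct vertices of G, and let G' be the graph obtained from G by adding a new vertex p adjacent only to s. Then G' has a non-separating s-t path if and only if G has a Hamiltonian s-t path. -/

import Mathlib

/-- The graph obtained from `G` by adding one new vertex (`none`) adjacent
exactly to the vertices in `N`. -/
def SimpleGraph.addVertex {V : Type*} (G : SimpleGraph V) (N : Set V) :
    SimpleGraph (Option V) where
  Adj a b :=
    match a, b with
    | some u, some w => G.Adj u w
    | some u, none => u ∈ N
    | none, some w => w ∈ N
    | none, none => False
  symm := by
    constructor
    rintro (u | u) (w | w) h
    · exact h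
    · exact h
    · exact h
    · exact h.symm
  loopless := by
    constructor
    rintro (u | u) h
    · exact h
    · exact G.irrefl h

lemma addVertex_adj_some_some {V : Type*} (G : SimpleGraph V) (N : Set V) {a b : V} :
    (G.addVertex N).Adj (some a) (some b) ↔ G.Adj a b := Iff.rfl

lemma addVertex_adj_some_none {V : Type*} (G : SimpleGraph V) (N : Set V) {a : V} :
    (G.addVertex N).Adj (some a) none ↔ a ∈ N := Iff.rfl

lemma addVertex_adj_none_some {V : Type*} (G : SimpleGraph V) (N : Set V) {a : V} :
    (G.addVertex N).Adj none (some a) ↔ a ∈ N := Iff.rfl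

lemma aux_none_not_mem {V : Type*} (G : SimpleGraph V) (s : V) :
    ∀ {x y : Option V} (W : (G.addVertex {s}).Walk x y), W.IsPath →
      (∃ a, x = some a) → (∃ b, y = some b) → none ∉ W.support := by
  intro x y W
  induction W with
  | nil =>
    rintro _ ⟨a, rfl⟩ _
    simp
  | @cons u v w h W ih =>
    rintro hp ⟨a, rfl⟩ ⟨b, rfl⟩
    match v, h, W with
    | some c, h, W =>
      have hW : W.IsPath := hp.of_cons
      have hnm := ih hW ⟨c, rfl⟩ ⟨b, rfl⟩
      simp only [SimpleGraph.Walk.support_cons, List.mem_cons]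
      rintro (h1 | h1)
      · exact Option.some_ne_none _ h1.symm
      · exact hnm h1
    | none, h, W =>
      exfalso
      have ha : a = s := (addVertex_adj_some_none G {s}).mp h
      match W with
      | .cons (v := z) h2 W2 =>
        match z, h2, W2 with
        | some c, h2, W2 =>
          have hc : c = s := (addVertex_adj_none_some G {s}).mp h2
          subst ha hc
          exact absurd hp.support_nodup (by simp)

lemma aux_strip {V : Type*} (G : SimpleGraph V) (s : V) :
    ∀ {x y : Option V} (W : (G.addVertex {s}).Walk x y) {a b : V}, x = some a → y = some b →
      none ∉ W.support → ∃ Q : G.Walk a b, W.support = Q.support.map some := by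
  intro x y W
  induction W with
  | nil =>
    rintro a b rfl hy _
    obtain rfl : a = b := Option.some.inj hy
    exact ⟨.nil, rfl⟩
  | @cons u v w h W ih =>
    rintro a b rfl rfl hnm
    simp only [SimpleGraph.Walk.support_cons, List.mem_cons] at hnm
    push_neg at hnm
    match v, h, W with
    | some c, h, W =>
      obtain ⟨Q, hQ⟩ := ih rfl rfl hnm.2
      refine ⟨.cons ((addVertex_adj_some_some G {s}).mp h) Q, ?_⟩
      simp [hQ]
    | none, h, W =>
      exact absurd W.start_mem_support hnm.2

/-- if `G` is connected, `s ≠ t`, and `G'` is obtained from `G` by adding a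
pendant vertex `p` adjacent only to `s`, then `G'` has a non-separating `s`-`t` path
if and only if `G` has a Hamiltonian `s`-`t` path. -/
theorem stmt1 {V : Type*} (G : SimpleGraph V) (hG : G.Connected) (s t : V) (hst : s ≠ t) :
    (∃ P : (G.addVertex {s}).Walk (some s) (some t), P.IsPath ∧
      ((G.addVertex {s}).induce {x | x ∉ P.support}).Connected) ↔
    (∃ Q : G.Walk s t, Q.IsPath ∧ ∀ w, w ∈ Q.support) := by
  constructor
  · rintro ⟨P, hP, hconn⟩
    have hnone : (none : Option V) ∉ P.support := aux_none_not_mem G s P hP ⟨s, rfl⟩ ⟨t, rfl⟩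
    obtain ⟨Q, hQ⟩ := aux_strip G s P rfl rfl hnone
    have hsub : ∀ x : Option V, x ∉ P.support → x = none := by
      intro x hx
      by_contra hxn
      have hreach := hconn.preconnected ⟨none, hnone⟩ ⟨x, hx⟩
      obtain ⟨W⟩ := hreach
      match W with
      | .nil => exact hxn rfl
      | .cons (v := z) h2 W2 =>
        have hz : (z : Option V) ∈ {x : Option V | x ∉ P.support} := z.2
        have hadj : (G.addVertex {s}).Adj none z.1 := h2
        have hz2 : z.1 ∉ P.support := z.2
        cases hz1 : z.1 with
        | none => rw [hz1] at hadj; exact hadj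
        | some c =>
          rw [hz1] at hadj hz2
          have hc : c = s := (addVertex_adj_none_some G {s}).mp hadj
          rw [hc] at hz2
          exact hz2 P.start_mem_support
    refine ⟨Q, ?_, ?_⟩
    · have hnd := hP.support_nodup
      rw [hQ] at hnd
      exact SimpleGraph.Walk.IsPath.mk' (List.Nodup.of_map some hnd)
    · intro w
      have : (some w : Option V) ∈ P.support := by
        by_contra hw
        exact Option.some_ne_none _ (hsub _ hw)
      rw [hQ, List.mem_map] at this
      obtain ⟨w', hw', he⟩ := this
      obtain rfl := Option.some.inj he
      exact hw'
  · rintro ⟨Q, hQ, hham⟩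
    let f : G →g (G.addVertex {s}) := ⟨some, fun h => h⟩
    refine ⟨Q.map f, SimpleGraph.Walk.map_isPath_of_injective (fun a b => Option.some.inj) hQ, ?_⟩
    have hsupp : (Q.map f).support = Q.support.map some := by
      rw [SimpleGraph.Walk.support_map]; rfl
    have hmem : ∀ x : Option V, x ∉ (Q.map f).support → x = none := by
      rintro (x | x) hx
      · rfl
      · exfalso
        apply hx
        rw [hsupp, List.mem_map]
        exact ⟨x, hham x, rfl⟩
    rw [SimpleGraph.connected_iff]
    constructor
    · intro u v
      have hu := hmem u.1 u.2
      have hv := hmem v.1 v.2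
      have : u = v := Subtype.ext (hu.trans hv.symm)
      rw [this]
    · refine ⟨⟨none, ?_⟩⟩
      simp only [Set.mem_setOf_eq, hsupp, List.mem_map]
      rintro ⟨w, _, hw⟩
      exact Option.some_ne_none _ hw
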